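/- Let b : ℕ → {0,1}, define α(j) = ∑_{i=0}^{∞} b(j+i)/32^{i+1}, let g : ℕ → {0,1}, and define reals x₀ = α(0) and x_{j+1} = 32·x_j − g(j) for all j. If g(i) = b(i) for all i < j but g(j) ≠ b(j), then x_{j+1} = α(j+1) + (2·b(j) − 1); in particular x_{j+1} ∈ {α(j+1) − 1, α(j+1) + 1} and |x_{j+1}| ≥ 30/31. -/

import Mathlib

/-- `alphaL b j = ∑_{i=0}^∞ b(j+i) / 32^(i+1)`. -/
noncomputable def alphaL (b : ℕ → Fin 2) (j : ℕ) : ℝ :=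
  ∑' i : ℕ, ((b (j + i) : ℕ) : ℝ) / 32 ^ (i + 1)

lemma geom_summable : Summable (fun i : ℕ => (1/32 : ℝ) ^ (i + 1)) := by
  have h : Summable (fun i : ℕ => (1/32 : ℝ) ^ i) :=
    summable_geometric_of_lt_one (by norm_num) (by norm_num)
  simpa [pow_succ] using h.mul_right (1/32 : ℝ)

lemma alpha_summable (b : ℕ → Fin 2) (j : ℕ) :
    Summable (fun i : ℕ => ((b (j + i) : ℕ) : ℝ) / 32 ^ (i + 1)) := by
  refine Summable.of_nonneg_of_le (fun i => by positivity) (fun i => ?_) geom_summable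
  rw [div_pow, one_pow]
  gcongr
  exact_mod_cast Nat.lt_succ_iff.mp (b (j + i)).isLt

lemma alpha_nonneg (b : ℕ → Fin 2) (j : ℕ) : 0 ≤ alphaL b j :=
  tsum_nonneg fun i => by positivity

lemma alpha_le (b : ℕ → Fin 2) (j : ℕ) : alphaL b j ≤ 1 / 31 := by
  have h1 : alphaL b j ≤ ∑' i : ℕ, (1/32 : ℝ) ^ (i + 1) := by
    refine Summable.tsum_le_tsum (fun i => ?_) (alpha_summable b j) geom_summable
    rw [div_pow, one_pow]
    gcongr
    exact_mod_cast Nat.lt_succ_iff.mp (b (j + i)).isLt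
  have h2 : ∑' i : ℕ, (1/32 : ℝ) ^ (i + 1) = 1 / 31 := by
    simp only [pow_succ]
    rw [tsum_mul_right, tsum_geometric_of_lt_one (by norm_num) (by norm_num)]
    norm_num
  linarith
lemma alpha_rec (b : ℕ → Fin 2) (j : ℕ) :
    32 * alphaL b j = ((b j : ℕ) : ℝ) + alphaL b (j + 1) := by
  unfold alphaL
  rw [Summable.tsum_eq_zero_add (alpha_summable b j), mul_add, ← tsum_mul_left]
  have h : ∀ i : ℕ, 32 * (((b (j + (i + 1)) : ℕ) : ℝ) / 32 ^ (i + 1 + 1)) =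
      ((b (j + 1 + i) : ℕ) : ℝ) / 32 ^ (i + 1) := by
    intro i
    rw [show j + 1 + i = j + (i + 1) by ring]
    field_simp
    ring
  rw [tsum_congr h]
  push_cast
  field_simp
  rw [add_zero]

theorem first_wrong_guess (b g : ℕ → Fin 2) (x : ℕ → ℝ)
    (hx0 : x 0 = alphaL b 0)
    (hx : ∀ j : ℕ, x (j + 1) = 32 * x j - ((g j : ℕ) : ℝ))
    (j : ℕ) (hcorrect : ∀ i < j, g i = b i) (hwrong : g j ≠ b j) :
    x (j + 1) = alphaL b (j + 1) + (2 * ((b j : ℕ) : ℝ) - 1) ∧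
    (x (j + 1) = alphaL b (j + 1) - 1 ∨ x (j + 1) = alphaL b (j + 1) + 1) ∧
    |x (j + 1)| ≥ 30 / 31 := by
  have hxj : ∀ k, (∀ i < k, g i = b i) → x k = alphaL b k := by
    intro k
    induction k with
    | zero => exact fun _ => hx0
    | succ n ih =>
      intro hc
      rw [hx n, ih (fun i hi => hc i (hi.trans (Nat.lt_succ_self n))),
        hc n (Nat.lt_succ_self n), alpha_rec b n]
      ring
  have hgb : ((g j : ℕ) : ℝ) = 1 - ((b j : ℕ) : ℝ) := by
    have h1 : (b j : ℕ) < 2 := (b j).isLt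
    have h2 : (g j : ℕ) < 2 := (g j).isLt
    have h3 : (g j : ℕ) ≠ (b j : ℕ) := fun h => hwrong (Fin.ext h)
    have : (g j : ℕ) = 1 - (b j : ℕ) ∧ (b j : ℕ) ≤ 1 := by omega
    push_cast [this.1, Nat.cast_sub this.2]
    ring
  have key : x (j + 1) = alphaL b (j + 1) + (2 * ((b j : ℕ) : ℝ) - 1) := by
    rw [hx j, hxj j hcorrect, alpha_rec b j, hgb]; ring
  refine ⟨key, ?_, ?_⟩
  · obtain hb | hb : (b j : ℕ) = 0 ∨ (b j : ℕ) = 1 := by omega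
    · left; rw [key, hb]; push_cast; ring
    · right; rw [key, hb]; push_cast; ring
  · have h0 := alpha_nonneg b (j + 1)
    have h1 := alpha_le b (j + 1)
    obtain hb | hb : (b j : ℕ) = 0 ∨ (b j : ℕ) = 1 := by omega
    · rw [abs_of_nonpos (by rw [key, hb]; push_cast; linarith), key, hb]
      push_cast; linarith
    · rw [abs_of_nonneg (by rw [key, hb]; push_cast; linarith), key, hb]
      push_cast; linarith
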